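/- Let (X,d) be a ν-generalized metric space and T : X → X a map such that d(T^n x, T^{n+1} x) → 0 for some x ∈ X. Then there exists k ∈ ℕ such that either the Picard iterates T^n x for n ≥ k are pairwise distinct, or they are all equal. -/
import Mathlib


open Filter Topology

/-- `(X,d)` is a ν-generalized metric space. -/
def NuGenMetric (ν : ℕ) {X : Type*} (d : X → X → ℝ) : Prop :=
  (∀ x y, 0 ≤ d x y) ∧
  (∀ x y, d x y = 0 ↔ x = y) ∧
  (∀ x y, d x y = d y x) ∧
  (∀ u : Fin (ν + 2) → X, Function.Injective u →
    d (u 0) (u (Fin.last (ν + 1))) ≤ ∑ i : Fin (ν + 1), d (u i.castSucc) (u i.succ))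

/-- `{x n}` is `k`-Cauchy: `lim_n sup_m d(x_n, x_{n+1+mk}) = 0` (sup taken in `[0,∞]`). -/
def IsKCauchy {X : Type*} (d : X → X → ℝ) (x : ℕ → X) (k : ℕ) : Prop :=
  Filter.Tendsto (fun n => ⨆ m : ℕ, ENNReal.ofReal (d (x n) (x (n + 1 + m * k))))
    Filter.atTop (nhds 0)

theorem stmt_4 {X : Type*} (ν : ℕ) (hν : 0 < ν) (d : X → X → ℝ)
    (hX : NuGenMetric ν d) (T : X → X) (x : X)
    (hd : Filter.Tendsto (fun n => d (T^[n] x) (T^[n + 1] x)) Filter.atTop (nhds 0)) :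
    ∃ k : ℕ, (∀ n ≥ k, ∀ n' ≥ k, n ≠ n' → T^[n] x ≠ T^[n'] x) ∨
      (∀ n ≥ k, ∀ n' ≥ k, T^[n] x = T^[n'] x) := by
  by_cases h : ∃ a b : ℕ, a < b ∧ T^[a] x = T^[b] x
  · obtain ⟨a, b, hab, heq⟩ := h
    set p := b - a with hp
    have hppos : 0 < p := Nat.sub_pos_of_lt hab
    have hper : ∀ m, a ≤ m → T^[m + p] x = T^[m] x := by
      intro m hm
      obtain ⟨j, rfl⟩ := Nat.exists_eq_add_of_le hm
      have h1 : a + j + p = j + b := by omega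
      have h2 : a + j = j + a := by omega
      rw [h1, Function.iterate_add_apply, ← heq, ← Function.iterate_add_apply, ← h2]
    have hperk : ∀ m, a ≤ m → ∀ j : ℕ, T^[m + j * p] x = T^[m] x := by
      intro m hm j
      induction j with
      | zero => simp
      | succ j ih =>
        have : m + (j + 1) * p = (m + j * p) + p := by ring
        rw [this, hper (m + j * p) (by omega), ih]
    have hzero : ∀ m, a ≤ m → d (T^[m] x) (T^[m + 1] x) = 0 := by
      intro m hm
      have htop : Filter.Tendsto (fun j : ℕ => m + j * p) Filter.atTop Filter.atTop := by
        apply Filter.tendsto_atTop_mono (f := fun j : ℕ => j)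
        · intro j; nlinarith
        · exact Filter.tendsto_id
      have h1 : Filter.Tendsto (fun j : ℕ => d (T^[m + j * p] x) (T^[m + j * p + 1] x))
          Filter.atTop (nhds 0) := hd.comp htop
      have h2 : (fun j : ℕ => d (T^[m + j * p] x) (T^[m + j * p + 1] x)) =
          fun _ : ℕ => d (T^[m] x) (T^[m + 1] x) := by
        funext j
        rw [hperk m hm j]
        have : m + j * p + 1 = (m + 1) + j * p := by omega
        rw [this, hperk (m + 1) (by omega) j]
      rw [h2] at h1
      exact (tendsto_nhds_unique tendsto_const_nhds h1)
    have hstep : ∀ m, a ≤ m → T^[m] x = T^[m + 1] x := fun m hm =>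
      (hX.2.1 _ _).mp (hzero m hm)
    have hconst : ∀ n, a ≤ n → T^[n] x = T^[a] x := by
      intro n hn
      induction n, hn using Nat.le_induction with
      | base => rfl
      | succ n hn ih => rw [← hstep n hn, ih]
    exact ⟨a, Or.inr fun n hn n' hn' => by rw [hconst n hn, hconst n' hn']⟩
  · push_neg at h
    refine ⟨0, Or.inl fun n _ n' _ hne => ?_⟩
    rcases lt_or_gt_of_ne hne with hlt | hlt
    · exact h n n' hlt
    · exact fun he => h n' n hlt he.symm
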